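/- Let V and W be Hilbert spaces, a : V × V → ℝ a continuous coercive bilinear form, b : V × W → ℝ a continuous bilinear form satisfying the inf-sup (Babuška–Brezzi) condition inf_{q∈W, q≠0} sup_{v∈V, v≠0} b(v,q)/(‖v‖‖q‖) ≥ β > 0. Then for every f ∈ V' and g ∈ W' there exists a unique pair (u, p) ∈ V × W such that a(u,v) + b(v,p) = f(v) for all v ∈ V and b(u,q) = g(q) for all q ∈ W, with ‖u‖ + ‖p‖ ≤ C(‖f‖ + ‖g‖). -/

import Mathlib

open RealInnerProductSpace

/-- Riesz representation of a continuous bilinear map, as a continuous linear operator. -/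
noncomputable def rieszOp {X Y : Type*} [NormedAddCommGroup X] [InnerProductSpace ℝ X]
    [NormedAddCommGroup Y] [InnerProductSpace ℝ Y] [CompleteSpace Y]
    (m : X →L[ℝ] Y →L[ℝ] ℝ) : X →L[ℝ] Y :=
  LinearMap.mkContinuous
    { toFun := fun x => (InnerProductSpace.toDual ℝ Y).symm (m x)
      map_add' := by intro x y; simp
      map_smul' := by intro c x; simp }
    ‖m‖ (fun x => by
      simp only [LinearMap.coe_mk, AddHom.coe_mk]
      rw [LinearIsometryEquiv.norm_map]
      exact m.le_opNorm x)

theorem rieszOp_apply {X Y : Type*} [NormedAddCommGroup X] [InnerProductSpace ℝ X]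
    [NormedAddCommGroup Y] [InnerProductSpace ℝ Y] [CompleteSpace Y]
    (m : X →L[ℝ] Y →L[ℝ] ℝ) (x : X) (y : Y) : ⟪rieszOp m x, y⟫ = m x y :=
  InnerProductSpace.toDual_symm_apply

/- Babuška–Brezzi theorem for saddle point problems: if `a` is a continuous
coercive bilinear form on `V`, and `b` is a continuous bilinear form on `V × W`
satisfying the inf-sup condition with constant `β > 0`, then for all data
`f ∈ V'`, `g ∈ W'` the saddle point problem has a unique solution `(u, p)`,
with the stability estimate `‖u‖ + ‖p‖ ≤ C (‖f‖ + ‖g‖)`. -/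
set_option maxHeartbeats 1000000 in
theorem babuska_brezzi
    {V W : Type*}
    [NormedAddCommGroup V] [InnerProductSpace ℝ V] [CompleteSpace V]
    [NormedAddCommGroup W] [InnerProductSpace ℝ W] [CompleteSpace W]
    (a : V →L[ℝ] V →L[ℝ] ℝ) (b : V →L[ℝ] W →L[ℝ] ℝ)
    (α : ℝ) (hα : 0 < α) (hcoer : ∀ v : V, α * ‖v‖ ^ 2 ≤ a v v)
    (β : ℝ) (hβ : 0 < β)
    (hinfsup : ∀ q : W, q ≠ 0 →
      β ≤ ⨆ v : {v : V // v ≠ 0}, b (v : V) q / (‖(v : V)‖ * ‖q‖)) :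
    ∃ C > (0 : ℝ), ∀ (f : V →L[ℝ] ℝ) (g : W →L[ℝ] ℝ),
      (∃! up : V × W,
        (∀ v : V, a up.1 v + b v up.2 = f v) ∧ (∀ q : W, b up.1 q = g q)) ∧
      (∀ up : V × W,
        ((∀ v : V, a up.1 v + b v up.2 = f v) ∧ (∀ q : W, b up.1 q = g q)) →
        ‖up.1‖ + ‖up.2‖ ≤ C * (‖f‖ + ‖g‖)) := by
  classical
  -- `a` is coercive in mathlib's sense
  have hA : IsCoercive a := ⟨α, hα, fun u => by
    have := hcoer u; nlinarith [sq_nonneg ‖u‖]⟩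
  set T := hA.continuousLinearEquivOfBilin with hTdef
  have hTapp : ∀ v w : V, ⟪T v, w⟫ = a v w := fun v w =>
    hA.continuousLinearEquivOfBilin_apply v w
  -- Riesz representations of `b`
  set Bt := rieszOp b.flip with hBtdef
  have hBt : ∀ (q : W) (v : V), ⟪Bt q, v⟫ = b v q := fun q v => rieszOp_apply b.flip q v
  set Bo := rieszOp b with hBodef
  have hBo : ∀ (u : V) (q : W), ⟪Bo u, q⟫ = b u q := fun u q => rieszOp_apply b u q
  -- the inf-sup condition gives a lower bound for `Bt`
  have hBtlow : ∀ q : W, β * ‖q‖ ≤ ‖Bt q‖ := by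
    intro q
    rcases eq_or_ne q 0 with rfl | hq
    · simp
    · have hqpos : (0 : ℝ) < ‖q‖ := norm_pos_iff.mpr hq
      have hsup : (⨆ v : {v : V // v ≠ 0}, b (v : V) q / (‖(v : V)‖ * ‖q‖))
          ≤ ‖Bt q‖ / ‖q‖ := by
        apply Real.iSup_le
        · rintro ⟨v, hv⟩
          have hvpos : (0 : ℝ) < ‖v‖ := norm_pos_iff.mpr hv
          have h1 : b v q ≤ ‖Bt q‖ * ‖v‖ := by
            rw [← hBt q v]; exact real_inner_le_norm (Bt q) v
          show b v q / (‖v‖ * ‖q‖) ≤ ‖Bt q‖ / ‖q‖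
          calc b v q / (‖v‖ * ‖q‖) ≤ (‖Bt q‖ * ‖v‖) / (‖v‖ * ‖q‖) := by
                gcongr
            _ = ‖Bt q‖ / ‖q‖ := by
                rw [mul_comm ‖v‖ ‖q‖]
                exact mul_div_mul_right _ _ hvpos.ne'
        · positivity
      have := le_trans (hinfsup q hq) hsup
      calc β * ‖q‖ ≤ ‖Bt q‖ / ‖q‖ * ‖q‖ := mul_le_mul_of_nonneg_right this hqpos.le
        _ = ‖Bt q‖ := by field_simp
  -- bound for `T`
  set M := max ‖(T : V →L[ℝ] V)‖ 1 with hMdef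
  have hM1 : (1 : ℝ) ≤ M := le_max_right _ _
  have hMpos : (0 : ℝ) < M := lt_of_lt_of_le one_pos hM1
  have hTbound : ∀ z : V, ‖T z‖ ≤ M * ‖z‖ := fun z =>
    le_trans ((T : V →L[ℝ] V).le_opNorm z)
      (mul_le_mul_of_nonneg_right (le_max_left _ _) (norm_nonneg z))
  -- Schur complement bilinear form
  set s : W →L[ℝ] W →L[ℝ] ℝ := b.comp (((T.symm : V →L[ℝ] V)).comp Bt) with hsdef
  have hs : ∀ q r : W, s q r = b (T.symm (Bt q)) r := fun q r => rfl
  -- coercivity of `s`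
  have hScoer : IsCoercive s := by
    refine ⟨α * β ^ 2 / M ^ 2, by positivity, fun q => ?_⟩
    set z := T.symm (Bt q) with hzdef
    have hz1 : T z = Bt q := T.apply_symm_apply (Bt q)
    have hzz : s q q = a z z := by
      rw [hs q q, ← hBt q z, ← hz1, hTapp]
    have h1 : α * ‖z‖ ^ 2 ≤ a z z := hcoer z
    have h2 : β * ‖q‖ ≤ M * ‖z‖ := le_trans (hBtlow q) (hz1 ▸ hTbound z)
    have h3 : (β * ‖q‖) ^ 2 ≤ (M * ‖z‖) ^ 2 :=
      pow_le_pow_left₀ (by positivity) h2 2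
    have hmain : α * (β * ‖q‖) ^ 2 ≤ a z z * M ^ 2 := by
      nlinarith [h1, h3, sq_nonneg M, sq_nonneg ‖z‖]
    have hrw : α * β ^ 2 / M ^ 2 * ‖q‖ * ‖q‖ = α * (β * ‖q‖) ^ 2 / M ^ 2 := by ring
    rw [hzz, hrw, div_le_iff₀ (by positivity)]
    exact hmain
  set Es := hScoer.continuousLinearEquivOfBilin with hEsdef
  have hEs : ∀ q r : W, ⟪Es q, r⟫ = s q r := fun q r =>
    hScoer.continuousLinearEquivOfBilin_apply q r
  clear hEsdef hsdef hMdef hBodef hBtdef hTdef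
  clear_value Es s M Bo Bt T
  -- constants
  set K1 := ‖(Es.symm : W →L[ℝ] W)‖ with hK1def
  set K2 := ‖(T.symm : V →L[ℝ] V)‖ with hK2def
  set C1 := K1 * (‖Bo‖ * K2 + 1) with hC1def
  set C2 := K2 * (1 + ‖Bt‖ * C1) with hC2def
  have hK1nn : 0 ≤ K1 := norm_nonneg _
  have hK2nn : 0 ≤ K2 := norm_nonneg _
  have hC1nn : 0 ≤ C1 := by rw [hC1def]; positivity
  have hC2nn : 0 ≤ C2 := by rw [hC2def]; positivity
  clear_value K1 K2 C1 C2
  refine ⟨C1 + C2 + 1, by positivity, ?_⟩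
  intro f g
  set F := (InnerProductSpace.toDual ℝ V).symm f with hFdef
  set G := (InnerProductSpace.toDual ℝ W).symm g with hGdef
  have hF : ∀ v : V, ⟪F, v⟫ = f v := fun v => InnerProductSpace.toDual_symm_apply
  have hG : ∀ q : W, ⟪G, q⟫ = g q := fun q => InnerProductSpace.toDual_symm_apply
  have hFnorm : ‖F‖ = ‖f‖ := LinearIsometryEquiv.norm_map _ f
  have hGnorm : ‖G‖ = ‖g‖ := LinearIsometryEquiv.norm_map _ g
  clear_value F G
  -- characterization of solutions
  have key : ∀ (u : V) (p : W),
      ((∀ v : V, a u v + b v p = f v) ∧ (∀ q : W, b u q = g q)) →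
      Es p = Bo (T.symm F) - G ∧ u = T.symm (F - Bt p) := by
    rintro u p ⟨h1, h2⟩
    have hTu : T u + Bt p = F := by
      apply ext_inner_right ℝ
      intro v
      rw [inner_add_left, hTapp, hBt, hF]
      exact h1 v
    have hTu' : T u = F - Bt p := eq_sub_of_add_eq hTu
    have hu : u = T.symm (F - Bt p) := by
      rw [← hTu', T.symm_apply_apply]
    have hBu : Bo u = G := by
      apply ext_inner_right ℝ
      intro q
      rw [hBo, hG]
      exact h2 q
    refine ⟨?_, hu⟩
    apply ext_inner_right ℝ
    intro r
    have hzz : T.symm (Bt p) = T.symm F - u := by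
      rw [hu, map_sub]; abel
    rw [hEs, hs, hzz, map_sub, ContinuousLinearMap.sub_apply, inner_sub_left, hBo, hG,
      h2 r]
  -- the solution
  set p := Es.symm (Bo (T.symm F) - G) with hpdef
  set u := T.symm (F - Bt p) with hudef
  have hEsp : Es p = Bo (T.symm F) - G := Es.apply_symm_apply _
  have hTu : T u = F - Bt p := T.apply_symm_apply _
  have huval : u = T.symm (F - Bt p) := hudef
  clear_value p u
  have hsol : (∀ v : V, a u v + b v p = f v) ∧ (∀ q : W, b u q = g q) := by
    constructor
    · intro v
      rw [← hTapp, ← hBt p v, hTu, inner_sub_left, ← hF]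
      ring
    · intro q
      rw [← hBo, huval, map_sub, map_sub, inner_sub_left]
      have h4 : ⟪Bo (T.symm (Bt p)), q⟫ = s p q := by rw [hBo, hs]
      rw [h4, ← hEs, hEsp, inner_sub_left, ← hG]
      ring
  constructor
  · refine ⟨(u, p), hsol, ?_⟩
    rintro ⟨u', p'⟩ hup'
    obtain ⟨hk1, hk2⟩ := key u' p' hup'
    have hp' : p' = p := by
      rw [hpdef, ← hk1, Es.symm_apply_apply]
    have hu' : u' = u := by
      rw [hk2, hp', ← huval]
    exact Prod.ext hu' hp'
  · rintro ⟨u', p'⟩ hup'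
    obtain ⟨hk1, hk2⟩ := key u' p' hup'
    have hp'eq : p' = Es.symm (Bo (T.symm F) - G) := by
      rw [← hk1, Es.symm_apply_apply]
    have hfg : (0:ℝ) ≤ ‖f‖ + ‖g‖ := by positivity
    have hTF : ‖T.symm F‖ ≤ K2 * ‖F‖ := by
      rw [hK2def]
      simpa using (T.symm : V →L[ℝ] V).le_opNorm F
    -- bound on p'
    have hpbound : ‖p'‖ ≤ C1 * (‖f‖ + ‖g‖) := by
      have h5 : ‖p'‖ ≤ K1 * ‖Bo (T.symm F) - G‖ := by
        rw [hp'eq, hK1def]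
        simpa using (Es.symm : W →L[ℝ] W).le_opNorm (Bo (T.symm F) - G)
      have h6 : ‖Bo (T.symm F) - G‖ ≤ ‖Bo‖ * (K2 * ‖f‖) + ‖g‖ := by
        calc ‖Bo (T.symm F) - G‖ ≤ ‖Bo (T.symm F)‖ + ‖G‖ := norm_sub_le _ _
          _ ≤ ‖Bo‖ * (K2 * ‖F‖) + ‖G‖ :=
              add_le_add_left (le_trans (Bo.le_opNorm _)
                (mul_le_mul_of_nonneg_left hTF (norm_nonneg Bo))) _
          _ = ‖Bo‖ * (K2 * ‖f‖) + ‖g‖ := by rw [hFnorm, hGnorm]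
      calc ‖p'‖ ≤ K1 * (‖Bo‖ * (K2 * ‖f‖) + ‖g‖) :=
            le_trans h5 (mul_le_mul_of_nonneg_left h6 hK1nn)
        _ ≤ C1 * (‖f‖ + ‖g‖) := by
            rw [hC1def, mul_assoc]
            refine mul_le_mul_of_nonneg_left ?_ hK1nn
            nlinarith [mul_nonneg (norm_nonneg Bo) hK2nn, norm_nonneg f, norm_nonneg g]
    -- bound on u'
    have hubound : ‖u'‖ ≤ C2 * (‖f‖ + ‖g‖) := by
      have h7 : ‖u'‖ ≤ K2 * (‖F - Bt p'‖) := by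
        rw [hk2, hK2def]
        simpa using (T.symm : V →L[ℝ] V).le_opNorm (F - Bt p')
      have h8 : ‖F - Bt p'‖ ≤ ‖f‖ + ‖Bt‖ * ‖p'‖ := by
        calc ‖F - Bt p'‖ ≤ ‖F‖ + ‖Bt p'‖ := norm_sub_le _ _
          _ ≤ ‖f‖ + ‖Bt‖ * ‖p'‖ := by
              rw [hFnorm]; exact add_le_add_right (Bt.le_opNorm _) _
      have h9 : ‖u'‖ ≤ K2 * (‖f‖ + ‖Bt‖ * ‖p'‖) :=
        le_trans h7 (mul_le_mul_of_nonneg_left h8 hK2nn)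
      have h10 : ‖Bt‖ * ‖p'‖ ≤ ‖Bt‖ * (C1 * (‖f‖ + ‖g‖)) :=
        mul_le_mul_of_nonneg_left hpbound (norm_nonneg Bt)
      calc ‖u'‖ ≤ K2 * (‖f‖ + ‖Bt‖ * (C1 * (‖f‖ + ‖g‖))) := by
            refine le_trans h9 (mul_le_mul_of_nonneg_left ?_ hK2nn)
            exact add_le_add_right h10 _
        _ ≤ C2 * (‖f‖ + ‖g‖) := by
            rw [hC2def, mul_assoc]
            refine mul_le_mul_of_nonneg_left ?_ hK2nn
            nlinarith [mul_nonneg (norm_nonneg Bt) hC1nn, norm_nonneg f, norm_nonneg g]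
    calc ‖u'‖ + ‖p'‖ ≤ C2 * (‖f‖ + ‖g‖) + C1 * (‖f‖ + ‖g‖) := add_le_add hubound hpbound
      _ ≤ (C1 + C2 + 1) * (‖f‖ + ‖g‖) := by nlinarith
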